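/- The infinite series ∑_{n=1}^∞ 1/(n(4n+1)(4n-1)(4n-3)) converges to π/12 - ln 2 + 1/2. -/

import Mathlib

open Real Filter Finset Topology

noncomputable def Haux (n : ℕ) : ℝ := harmonic n

noncomputable def Laux (k : ℕ) : ℝ := ∑ i ∈ Finset.range k, (-1 : ℝ)^i / (2*i+1)

lemma Haux_succ (n : ℕ) : Haux (n+1) = Haux n + 1/((n:ℝ)+1) := by
  unfold Haux
  rw [harmonic_succ]
  push_cast
  ring

lemma Laux_succ (k : ℕ) : Laux (k+1) = Laux k + (-1:ℝ)^k / (2*(k:ℝ)+1) := by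
  unfold Laux
  rw [Finset.sum_range_succ]

lemma key (N : ℕ) :
    ∑ i ∈ Finset.range N, (1:ℝ) / (((i:ℝ)+1) * (4*((i:ℝ)+1)+1) * (4*((i:ℝ)+1)-1) * (4*((i:ℝ)+1)-3))
      = (1/3) * Laux (2*N) - (2/3) * (Haux (4*N) - Haux (2*N)) - (1/3) * (Haux (2*N) - Haux N)
        + 1/2 - 1/(2*(4*(N:ℝ)+1)) := by
  induction N with
  | zero => simp [Haux, Laux]
  | succ n ih =>
    rw [Finset.sum_range_succ, ih]
    have h2 : 2*(n+1) = 2*n+1+1 := by ring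
    have h4 : 4*(n+1) = 4*n+1+1+1+1 := by ring
    rw [h2, h4, Haux_succ, Haux_succ, Haux_succ, Haux_succ, Haux_succ, Haux_succ, Haux_succ,
      Laux_succ, Laux_succ]
    have hn : (0:ℝ) ≤ (n:ℝ) := Nat.cast_nonneg n
    have e1 : ((-1:ℝ))^(2*n) = 1 := by
      rw [pow_mul]; norm_num
    have e2 : ((-1:ℝ))^(2*n+1) = -1 := by
      rw [pow_succ, pow_mul]; norm_num
    rw [e1, e2]
    push_cast
    have d1 : ((n:ℝ)+1) ≠ 0 := by positivity
    have d2 : (4*(n:ℝ)+1) ≠ 0 := by positivity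
    have d3 : (4*(n:ℝ)+2) ≠ 0 := by positivity
    have d4 : (4*(n:ℝ)+3) ≠ 0 := by positivity
    have d5 : (4*(n:ℝ)+4) ≠ 0 := by positivity
    have d6 : (4*(n:ℝ)+5) ≠ 0 := by positivity
    have d7 : (2*(n:ℝ)+1) ≠ 0 := by positivity
    have d8 : (2*(n:ℝ)+2) ≠ 0 := by positivity
    have d9 : (2*(2*(n:ℝ)+1)+1) ≠ 0 := by positivity
    have key' : (4*((n:ℝ)+1)+1) = 4*(n:ℝ)+5 := by ring
    have key2 : (4*((n:ℝ)+1)-1) = 4*(n:ℝ)+3 := by ring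
    have key3 : (4*((n:ℝ)+1)-3) = 4*(n:ℝ)+1 := by ring
    rw [key', key2, key3]
    field_simp
    ring

lemma tendsto_H_double : Tendsto (fun N => Haux (2*N) - Haux N) atTop (𝓝 (Real.log 2)) := by
  have hγ := Real.tendsto_harmonic_sub_log
  have hdbl : Tendsto (fun n : ℕ => 2*n) atTop atTop :=
    tendsto_atTop_mono (fun n => by simp; omega) tendsto_id
  have h2 : Tendsto (fun N : ℕ => (Haux (2*N) - Real.log (2*N)) - (Haux N - Real.log N) + Real.log 2)
      atTop (𝓝 (Real.log 2)) := by
    have := ((hγ.comp hdbl).sub hγ).add_const (Real.log 2)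
    simpa [Haux] using this
  apply h2.congr'
  filter_upwards [eventually_ge_atTop 1] with n hn
  have hn' : (0:ℝ) < (n:ℝ) := by exact_mod_cast hn
  have hl : Real.log (2*(n:ℝ)) = Real.log 2 + Real.log n :=
    Real.log_mul (by norm_num) (ne_of_gt hn')
  rw [hl]
  ring

theorem stmt_7 : HasSum (fun n : ℕ+ => 1 / ((n : ℝ) * (4*(n : ℝ)+1) * (4*(n : ℝ)-1) * (4*(n : ℝ)-3))) (π / 12 - Real.log 2 + 1 / 2) := by
  rw [← Equiv.pnatEquivNat.symm.hasSum_iff]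
  have hfun : ((fun n : ℕ+ => 1 / ((n : ℝ) * (4*(n : ℝ)+1) * (4*(n : ℝ)-1) * (4*(n : ℝ)-3)))
      ∘ Equiv.pnatEquivNat.symm)
      = fun i : ℕ => (1:ℝ) / (((i:ℝ)+1) * (4*((i:ℝ)+1)+1) * (4*((i:ℝ)+1)-1) * (4*((i:ℝ)+1)-3)) := by
    funext i
    simp [Function.comp, Equiv.pnatEquivNat, Nat.succPNat]
  rw [hfun]
  have hnonneg : ∀ i : ℕ, (0:ℝ) ≤ (1:ℝ) / (((i:ℝ)+1) * (4*((i:ℝ)+1)+1) * (4*((i:ℝ)+1)-1) * (4*((i:ℝ)+1)-3)) := by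
    intro i
    have hi : (0:ℝ) ≤ (i:ℝ) := Nat.cast_nonneg i
    have p1 : (0:ℝ) < (i:ℝ)+1 := by positivity
    have p2 : (0:ℝ) < 4*((i:ℝ)+1)+1 := by positivity
    have p3 : (0:ℝ) < 4*((i:ℝ)+1)-1 := by linarith
    have p4 : (0:ℝ) < 4*((i:ℝ)+1)-3 := by linarith
    have hp : (0:ℝ) < (((i:ℝ)+1) * (4*((i:ℝ)+1)+1) * (4*((i:ℝ)+1)-1) * (4*((i:ℝ)+1)-3)) :=
      mul_pos (mul_pos (mul_pos p1 p2) p3) p4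
    positivity
  rw [hasSum_iff_tendsto_nat_of_nonneg hnonneg]
  have habs : Tendsto (fun N => (1/3) * Laux (2*N) - (2/3) * (Haux (4*N) - Haux (2*N))
      - (1/3) * (Haux (2*N) - Haux N) + 1/2 - 1/(2*(4*(N:ℝ)+1)))
      atTop (𝓝 (π / 12 - Real.log 2 + 1 / 2)) := by
    have hdbl : Tendsto (fun n : ℕ => 2*n) atTop atTop :=
      tendsto_atTop_mono (fun n => by simp; omega) tendsto_id
    have t1 : Tendsto (fun N => Laux (2*N)) atTop (𝓝 (π/4)) :=
      Real.tendsto_sum_pi_div_four.comp hdbl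
    have t3 := tendsto_H_double
    have t2 : Tendsto (fun N => Haux (4*N) - Haux (2*N)) atTop (𝓝 (Real.log 2)) := by
      have h := t3.comp hdbl
      have he : (fun n : ℕ => Haux (2*(2*n)) - Haux (2*n)) = fun n : ℕ => Haux (4*n) - Haux (2*n) := by
        funext n; congr 2; ring
      rwa [Function.comp_def, he] at h
    have t4 : Tendsto (fun N : ℕ => 1/(2*(4*(N:ℝ)+1))) atTop (𝓝 (0:ℝ)) := by
      have hd : Tendsto (fun N : ℕ => 2*(4*(N:ℝ)+1)) atTop atTop := by
        apply tendsto_atTop_mono (f := fun N : ℕ => (N:ℝ)) _ tendsto_natCast_atTop_atTop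
        intro n
        have : (0:ℝ) ≤ (n:ℝ) := Nat.cast_nonneg n
        linarith
      have t4' := tendsto_inv_atTop_zero.comp hd
      rw [Function.comp_def] at t4'
      exact t4'.congr fun n => (one_div _).symm
    have := ((((t1.const_mul (1/3:ℝ)).sub (t2.const_mul (2/3:ℝ))).sub
      (t3.const_mul (1/3:ℝ))).add_const (1/2:ℝ)).sub t4
    convert this using 2
    ring
  apply habs.congr'
  filter_upwards with n
  rw [key]
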